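/- Let u = 0.4852. For every point (z,v) in the affine convex hull in ℂ×ℝ ≅ ℝ³ of the six points (0,0), (2,0), (i√2,0), (0,2√2), (2,2√2), (i√2,2√2), the point (z,v,u) lies in at least one of the following eight extended Cygan balls: the balls of radius √2 centered at (0,0), (2,0), (i√2,0), (0,2√2), (2,2√2), (i√2,2√2), and the balls of radius (4/3)^{1/4} centered at (2/3 + (1/3)i√2, (2/3)√2) and at (4/3 + (1/3)i√2, 2√2). -/

import Mathlib

/-- The extended Cygan distance from the point with horospherical coordinates
`(z,v,u)` to the boundary point `(c,w)`. -/
noncomputable def xcDist (z : ℂ) (v u : ℝ) (c : ℂ) (w : ℝ) : ℝ :=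
  (((‖z - c‖) ^ 2 + u) ^ 2
    + (v - w + 2 * (z * (starRingEnd ℂ) c).im) ^ 2) ^ ((1 : ℝ) / 4)

noncomputable def sqrt2 : ℝ := Real.sqrt 2

noncomputable def is2 : ℂ := Complex.I * (Real.sqrt 2 : ℂ)

namespace CoverAux

/-! Integer interval checker. Scale: real coordinate t ↦ integer 960000*t.
`u = 1213/2500`, so `960000^2 * u = 447160320000`.
Condition checked: `9*(Q + S^2*u)^2 + 2*S^2*max(L⁺²,L⁻²) < 9*S^4*r4` where the
L's are `3*S*(linear term)` bounds. -/

def ballCheck (X0 X1 B0 B1 C0 C1 A B AL3 GA3 DE3 R36 : ℤ) : Bool :=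
  decide (9*((max ((X0-A)^2) ((X1-A)^2) + 2 * max ((B0-B)^2) ((B1-B)^2)) + 447160320000)^2
    + 1843200000000 * max ((3*C0 + min (AL3*X0) (AL3*X1) + min (GA3*B0) (GA3*B1) + DE3)^2)
        ((3*C1 + max (AL3*X0) (AL3*X1) + max (GA3*B0) (GA3*B1) + DE3)^2) < R36)

def R4 : ℤ := 30576476160000000000000000
def R43 : ℤ := 10192158720000000000000000

def check (X0 X1 B0 B1 C0 C1 : ℤ) : Bool :=
  let X1' := min X1 (1920000 - 2*B0)
  ballCheck X0 X1' B0 B1 C0 C1 0 0 (0) 0 (0) R4 ||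
  ballCheck X0 X1' B0 B1 C0 C1 1920000 0 (0) 12 (0) R4 ||
  ballCheck X0 X1' B0 B1 C0 C1 0 960000 (-6) 0 (0) R4 ||
  ballCheck X0 X1' B0 B1 C0 C1 0 0 (0) 0 (-5760000) R4 ||
  ballCheck X0 X1' B0 B1 C0 C1 1920000 0 (0) 12 (-5760000) R4 ||
  ballCheck X0 X1' B0 B1 C0 C1 0 960000 (-6) 0 (-5760000) R4 ||
  ballCheck X0 X1' B0 B1 C0 C1 640000 320000 (-2) 4 (-1920000) R43 ||
  ballCheck X0 X1' B0 B1 C0 C1 1280000 320000 (-2) 8 (-5760000) R43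

inductive T | leaf | sx (l r : T) | sb (l r : T) | sc (l r : T)

def valid : ℤ → ℤ → ℤ → ℤ → ℤ → ℤ → T → Bool
  | X0, X1, B0, B1, C0, C1, T.leaf => decide (1920000 < X0 + 2*B0) || check X0 X1 B0 B1 C0 C1
  | X0, X1, B0, B1, C0, C1, T.sx l r =>
      valid X0 ((X0+X1)/2) B0 B1 C0 C1 l && valid ((X0+X1)/2) X1 B0 B1 C0 C1 r
  | X0, X1, B0, B1, C0, C1, T.sb l r =>
      valid X0 X1 B0 ((B0+B1)/2) C0 C1 l && valid X0 X1 ((B0+B1)/2) B1 C0 C1 r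
  | X0, X1, B0, B1, C0, C1, T.sc l r =>
      valid X0 X1 B0 B1 C0 ((C0+C1)/2) l && valid X0 X1 B0 B1 ((C0+C1)/2) C1 r

def DisjQ (x b c : ℝ) : Prop :=
  ((x - 0)^2 + 2*(b - 0)^2 + (1213/2500 : ℝ))^2 + 2*(c + 0*x + 0*b + 0)^2 < 4 ∨
  ((x - 2)^2 + 2*(b - 0)^2 + (1213/2500 : ℝ))^2 + 2*(c + 0*x + 4*b + 0)^2 < 4 ∨
  ((x - 0)^2 + 2*(b - 1)^2 + (1213/2500 : ℝ))^2 + 2*(c + (-2)*x + 0*b + 0)^2 < 4 ∨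
  ((x - 0)^2 + 2*(b - 0)^2 + (1213/2500 : ℝ))^2 + 2*(c + 0*x + 0*b + (-2))^2 < 4 ∨
  ((x - 2)^2 + 2*(b - 0)^2 + (1213/2500 : ℝ))^2 + 2*(c + 0*x + 4*b + (-2))^2 < 4 ∨
  ((x - 0)^2 + 2*(b - 1)^2 + (1213/2500 : ℝ))^2 + 2*(c + (-2)*x + 0*b + (-2))^2 < 4 ∨
  ((x - 2/3)^2 + 2*(b - 1/3)^2 + (1213/2500 : ℝ))^2 + 2*(c + (-2/3)*x + (4/3)*b + (-2/3))^2 < 4/3 ∨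
  ((x - 4/3)^2 + 2*(b - 1/3)^2 + (1213/2500 : ℝ))^2 + 2*(c + (-2/3)*x + (8/3)*b + (-2))^2 < 4/3

lemma sq_le_max {t l r : ℝ} (h1 : l ≤ t) (h2 : t ≤ r) : t^2 ≤ max (l^2) (r^2) := by
  rcases le_total t 0 with h | h
  · exact le_max_of_le_left (by nlinarith)
  · exact le_max_of_le_right (by nlinarith)

lemma mul_le_max (α : ℝ) {t l r : ℝ} (h1 : l ≤ t) (h2 : t ≤ r) :
    α*t ≤ max (α*l) (α*r) := by
  rcases le_total 0 α with h | h
  · exact le_max_of_le_right (by nlinarith)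
  · exact le_max_of_le_left (by nlinarith)

lemma min_le_mul (α : ℝ) {t l r : ℝ} (h1 : l ≤ t) (h2 : t ≤ r) :
    min (α*l) (α*r) ≤ α*t := by
  rcases le_total 0 α with h | h
  · exact min_le_of_left_le (by nlinarith)
  · exact min_le_of_right_le (by nlinarith)

set_option maxHeartbeats 1000000 in
lemma ballCheck_sound {X0 X1 B0 B1 C0 C1 A B AL3 GA3 DE3 R36 : ℤ}
    (h : ballCheck X0 X1 B0 B1 C0 C1 A B AL3 GA3 DE3 R36 = true)
    {x b c a β α γ δ r4 : ℝ}
    (hA : (A:ℝ) = 960000*a) (hB : (B:ℝ) = 960000*β)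
    (hAL : (AL3:ℝ) = 3*α) (hGA : (GA3:ℝ) = 3*γ) (hDE : (DE3:ℝ) = 3*960000*δ)
    (hR : (R36:ℝ) = 9*960000^4*r4)
    (hx0 : (X0:ℝ) ≤ 960000*x) (hx1 : 960000*x ≤ X1)
    (hb0 : (B0:ℝ) ≤ 960000*b) (hb1 : 960000*b ≤ B1)
    (hc0 : (C0:ℝ) ≤ 960000*c) (hc1 : 960000*c ≤ C1) :
    ((x - a)^2 + 2*(b - β)^2 + (1213/2500 : ℝ))^2 + 2*(c + α*x + γ*b + δ)^2 < r4 := by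
  simp only [ballCheck, decide_eq_true_eq] at h
  have h' : (9:ℝ)*((max (((X0:ℝ)-A)^2) (((X1:ℝ)-A)^2)
        + 2 * max (((B0:ℝ)-B)^2) (((B1:ℝ)-B)^2)) + 447160320000)^2
      + 1843200000000 * max ((3*(C0:ℝ) + min ((AL3:ℝ)*X0) ((AL3:ℝ)*X1)
          + min ((GA3:ℝ)*B0) ((GA3:ℝ)*B1) + DE3)^2)
        ((3*(C1:ℝ) + max ((AL3:ℝ)*X0) ((AL3:ℝ)*X1)
          + max ((GA3:ℝ)*B0) ((GA3:ℝ)*B1) + DE3)^2) < (R36:ℝ) := by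
    exact_mod_cast h
  set M1 := max (((X0:ℝ)-A)^2) (((X1:ℝ)-A)^2) with hM1
  set M2 := max (((B0:ℝ)-B)^2) (((B1:ℝ)-B)^2) with hM2
  have e1 : (960000*x - (A:ℝ))^2 ≤ M1 := sq_le_max (by linarith) (by linarith)
  have e2 : (960000*b - (B:ℝ))^2 ≤ M2 := sq_le_max (by linarith) (by linarith)
  have eQ1 : (960000:ℝ)^2*((x-a)^2) = (960000*x - (A:ℝ))^2 := by rw [hA]; ring
  have eQ2 : (960000:ℝ)^2*((b-β)^2) = (960000*b - (B:ℝ))^2 := by rw [hB]; ring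
  -- linear part
  set LR : ℝ := 3*(960000*c) + (AL3:ℝ)*(960000*x) + (GA3:ℝ)*(960000*b) + DE3 with hLR
  have eL : LR = 3*960000*(c + α*x + γ*b + δ) := by rw [hLR, hAL, hGA, hDE]; ring
  have l1 : LR ≤ 3*(C1:ℝ) + max ((AL3:ℝ)*X0) ((AL3:ℝ)*X1)
      + max ((GA3:ℝ)*B0) ((GA3:ℝ)*B1) + DE3 := by
    have t1 := mul_le_max (AL3:ℝ) hx0 hx1
    have t2 := mul_le_max (GA3:ℝ) hb0 hb1
    rw [hLR]; gcongr
  have l2 : 3*(C0:ℝ) + min ((AL3:ℝ)*X0) ((AL3:ℝ)*X1)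
      + min ((GA3:ℝ)*B0) ((GA3:ℝ)*B1) + DE3 ≤ LR := by
    have t1 := min_le_mul (AL3:ℝ) hx0 hx1
    have t2 := min_le_mul (GA3:ℝ) hb0 hb1
    rw [hLR]; gcongr
  set ML := max ((3*(C0:ℝ) + min ((AL3:ℝ)*X0) ((AL3:ℝ)*X1)
      + min ((GA3:ℝ)*B0) ((GA3:ℝ)*B1) + DE3)^2)
    ((3*(C1:ℝ) + max ((AL3:ℝ)*X0) ((AL3:ℝ)*X1)
      + max ((GA3:ℝ)*B0) ((GA3:ℝ)*B1) + DE3)^2) with hML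
  have l3 : LR^2 ≤ ML := sq_le_max l2 l1
  have hLsq : 9*(960000:ℝ)^2*((c + α*x + γ*b + δ)^2) ≤ ML := by
    calc 9*(960000:ℝ)^2*((c + α*x + γ*b + δ)^2)
        = (3*960000*(c + α*x + γ*b + δ))^2 := by ring
      _ = LR^2 := by rw [eL]
      _ ≤ ML := l3
  -- quadratic part
  have hQ : (960000:ℝ)^2*((x-a)^2 + 2*(b-β)^2 + 1213/2500) ≤ M1 + 2*M2 + 447160320000 := by
    have expand : (960000:ℝ)^2*((x-a)^2 + 2*(b-β)^2 + 1213/2500)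
        = (960000:ℝ)^2*((x-a)^2) + 2*((960000:ℝ)^2*((b-β)^2)) + 447160320000 := by ring
    rw [expand, eQ1, eQ2]; linarith
  have hQ0 : (0:ℝ) ≤ (960000:ℝ)^2*((x-a)^2 + 2*(b-β)^2 + 1213/2500) := by positivity
  have hQsq : (960000:ℝ)^4*(((x-a)^2 + 2*(b-β)^2 + 1213/2500)^2)
      ≤ (M1 + 2*M2 + 447160320000)^2 := by
    calc (960000:ℝ)^4*(((x-a)^2 + 2*(b-β)^2 + 1213/2500)^2)
        = ((960000:ℝ)^2*((x-a)^2 + 2*(b-β)^2 + 1213/2500))^2 := by ring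
      _ ≤ (M1 + 2*M2 + 447160320000)^2 := pow_le_pow_left₀ hQ0 hQ 2
  have hml : 1843200000000 * (9*(960000:ℝ)^2*((c + α*x + γ*b + δ)^2))
      ≤ 1843200000000 * ML :=
    mul_le_mul_of_nonneg_left hLsq (by norm_num)
  have key : 9*(960000:ℝ)^4*(((x - a)^2 + 2*(b - β)^2 + (1213/2500 : ℝ))^2
      + 2*(c + α*x + γ*b + δ)^2) < 9*(960000:ℝ)^4*r4 := by
    have expand : 9*(960000:ℝ)^4*(((x - a)^2 + 2*(b - β)^2 + (1213/2500 : ℝ))^2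
        + 2*(c + α*x + γ*b + δ)^2)
      = 9*((960000:ℝ)^4*(((x-a)^2 + 2*(b-β)^2 + 1213/2500)^2))
        + 1843200000000 * (9*(960000:ℝ)^2*((c + α*x + γ*b + δ)^2)) := by ring
    have hR' : (R36:ℝ) = 9*(960000:ℝ)^4*r4 := by rw [hR]
    rw [expand]
    linarith
  have hpos : (0:ℝ) < 9*(960000:ℝ)^4 := by norm_num
  exact lt_of_mul_lt_mul_left key hpos.le

lemma check_sound {X0 X1 B0 B1 C0 C1 : ℤ}
    (h : check X0 X1 B0 B1 C0 C1 = true)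
    {x b c : ℝ}
    (hx0 : (X0:ℝ) ≤ 960000*x) (hx1 : 960000*x ≤ X1)
    (hb0 : (B0:ℝ) ≤ 960000*b) (hb1 : 960000*b ≤ B1)
    (hc0 : (C0:ℝ) ≤ 960000*c) (hc1 : 960000*c ≤ C1)
    (hreg : x + 2*b ≤ 2) : DisjQ x b c := by
  rw [check] at h
  have hx1' : 960000*x ≤ ((min X1 (1920000 - 2*B0) : ℤ) : ℝ) := by
    push_cast
    refine le_min hx1 ?_
    nlinarith [hb0, hreg]
  simp only [Bool.or_eq_true] at h
  rw [DisjQ]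
  rcases h with ((((((h|h)|h)|h)|h)|h)|h)|h
  · refine Or.inl ?_
    exact ballCheck_sound h (a := 0) (β := 0) (α := 0) (γ := 0) (δ := 0) (r4 := 4)
      (by norm_num) (by norm_num) (by norm_num) (by norm_num) (by norm_num) (by norm_num [R4, R43])
      hx0 hx1' hb0 hb1 hc0 hc1
  · refine Or.inr (Or.inl ?_)
    exact ballCheck_sound h (a := 2) (β := 0) (α := 0) (γ := 4) (δ := 0) (r4 := 4)
      (by norm_num) (by norm_num) (by norm_num) (by norm_num) (by norm_num) (by norm_num [R4, R43])
      hx0 hx1' hb0 hb1 hc0 hc1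
  · refine Or.inr (Or.inr (Or.inl ?_))
    exact ballCheck_sound h (a := 0) (β := 1) (α := (-2)) (γ := 0) (δ := 0) (r4 := 4)
      (by norm_num) (by norm_num) (by norm_num) (by norm_num) (by norm_num) (by norm_num [R4, R43])
      hx0 hx1' hb0 hb1 hc0 hc1
  · refine Or.inr (Or.inr (Or.inr (Or.inl ?_)))
    exact ballCheck_sound h (a := 0) (β := 0) (α := 0) (γ := 0) (δ := (-2)) (r4 := 4)
      (by norm_num) (by norm_num) (by norm_num) (by norm_num) (by norm_num) (by norm_num [R4, R43])
      hx0 hx1' hb0 hb1 hc0 hc1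
  · refine Or.inr (Or.inr (Or.inr (Or.inr (Or.inl ?_))))
    exact ballCheck_sound h (a := 2) (β := 0) (α := 0) (γ := 4) (δ := (-2)) (r4 := 4)
      (by norm_num) (by norm_num) (by norm_num) (by norm_num) (by norm_num) (by norm_num [R4, R43])
      hx0 hx1' hb0 hb1 hc0 hc1
  · refine Or.inr (Or.inr (Or.inr (Or.inr (Or.inr (Or.inl ?_)))))
    exact ballCheck_sound h (a := 0) (β := 1) (α := (-2)) (γ := 0) (δ := (-2)) (r4 := 4)
      (by norm_num) (by norm_num) (by norm_num) (by norm_num) (by norm_num) (by norm_num [R4, R43])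
      hx0 hx1' hb0 hb1 hc0 hc1
  · refine Or.inr (Or.inr (Or.inr (Or.inr (Or.inr (Or.inr (Or.inl ?_))))))
    exact ballCheck_sound h (a := 2/3) (β := 1/3) (α := (-2/3)) (γ := (4/3)) (δ := (-2/3)) (r4 := 4/3)
      (by norm_num) (by norm_num) (by norm_num) (by norm_num) (by norm_num) (by norm_num [R4, R43])
      hx0 hx1' hb0 hb1 hc0 hc1
  · refine Or.inr (Or.inr (Or.inr (Or.inr (Or.inr (Or.inr (Or.inr ?_))))))
    exact ballCheck_sound h (a := 4/3) (β := 1/3) (α := (-2/3)) (γ := (8/3)) (δ := (-2)) (r4 := 4/3)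
      (by norm_num) (by norm_num) (by norm_num) (by norm_num) (by norm_num) (by norm_num [R4, R43])
      hx0 hx1' hb0 hb1 hc0 hc1

lemma valid_sound : ∀ (t : T) (X0 X1 B0 B1 C0 C1 : ℤ),
    valid X0 X1 B0 B1 C0 C1 t = true →
    ∀ {x b c : ℝ}, (X0:ℝ) ≤ 960000*x → 960000*x ≤ X1 →
      (B0:ℝ) ≤ 960000*b → 960000*b ≤ B1 →
      (C0:ℝ) ≤ 960000*c → 960000*c ≤ C1 →
      x + 2*b ≤ 2 → DisjQ x b c := by
  intro t
  induction t with
  | leaf =>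
    intro X0 X1 B0 B1 C0 C1 h x b c hx0 hx1 hb0 hb1 hc0 hc1 hreg
    rw [valid, Bool.or_eq_true, decide_eq_true_eq] at h
    rcases h with h | h
    · exfalso
      have : ((1920000:ℤ):ℝ) < ((X0 + 2*B0 : ℤ):ℝ) := by exact_mod_cast h
      push_cast at this
      nlinarith [hx0, hb0, hreg]
    · exact check_sound h hx0 hx1 hb0 hb1 hc0 hc1 hreg
  | sx l r ihl ihr =>
    intro X0 X1 B0 B1 C0 C1 h x b c hx0 hx1 hb0 hb1 hc0 hc1 hreg
    rw [valid, Bool.and_eq_true] at h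
    rcases le_total (960000*x) ((((X0+X1)/2 : ℤ)):ℝ) with hm | hm
    · exact ihl _ _ _ _ _ _ h.1 hx0 hm hb0 hb1 hc0 hc1 hreg
    · exact ihr _ _ _ _ _ _ h.2 hm hx1 hb0 hb1 hc0 hc1 hreg
  | sb l r ihl ihr =>
    intro X0 X1 B0 B1 C0 C1 h x b c hx0 hx1 hb0 hb1 hc0 hc1 hreg
    rw [valid, Bool.and_eq_true] at h
    rcases le_total (960000*b) ((((B0+B1)/2 : ℤ)):ℝ) with hm | hm
    · exact ihl _ _ _ _ _ _ h.1 hx0 hx1 hb0 hm hc0 hc1 hreg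
    · exact ihr _ _ _ _ _ _ h.2 hx0 hx1 hm hb1 hc0 hc1 hreg
  | sc l r ihl ihr =>
    intro X0 X1 B0 B1 C0 C1 h x b c hx0 hx1 hb0 hb1 hc0 hc1 hreg
    rw [valid, Bool.and_eq_true] at h
    rcases le_total (960000*c) ((((C0+C1)/2 : ℤ)):ℝ) with hm | hm
    · exact ihl _ _ _ _ _ _ h.1 hx0 hx1 hb0 hb1 hc0 hm hreg
    · exact ihr _ _ _ _ _ _ h.2 hx0 hx1 hb0 hb1 hm hc1 hreg

def bigTree : T :=
  (T.sx (T.sb (T.sc (T.sx T.leaf (T.sb (T.sc T.leaf (T.sx T.leaf (T.sb (T.sc T.leaf (T.sx T.leaf (T.sb (T.sc T.leaf T.leaf) T.leaf))) (T.sc T.leaf T.leaf)))) (T.sc (T.sx T.leaf (T.sb T.leaf (T.sc (T.sx T.leaf (T.sb T.leaf (T.sc T.leaf T.leaf))) T.leaf))) T.leaf))) (T.sx T.leaf (T.sb (T.sc (T.sx T.leaf (T.sb T.leaf (T.sc T.leaf T.leaf))) T.leaf) (T.sc (T.sx (T.sb T.leaf T.leaf) (T.sb (T.sc T.leaf (T.sx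 T.leaf (T.sb T.leaf T.leaf))) (T.sc (T.sx (T.sb T.leaf T.leaf) T.leaf) T.leaf))) (T.sx T.leaf (T.sb T.leaf (T.sc (T.sx T.leaf T.leaf) (T.sx T.leaf (T.sb T.leaf (T.sc (T.sx T.leaf T.leaf) T.leaf)))))))))) (T.sc (T.sx T.leaf (T.sb (T.sc (T.sx T.leaf (T.sb (T.sc (T.sx T.leaf (T.sb (T.sc (T.sx T.leaf (T.sb (T.sc (T.sx T.leaf (T.sb T.leaf T.leaf)) T.leaf) T.leaf)) T.leaf) T.leaf)) T.leaf) T.leaf)) (T.sx (T.sb (T.sc T.leaf T.leaf) T.leaf) (T.sb (T.sc T.leaf (T.sx (T.sb T.leaf T.leaf) T.leaf)) T.leaf))) T.leaf)) (T.sx (T.sb (T.sc (T.sx (T.sb T.leaf (T.sc T.leaf T.leaf)) T.leaf) T.leaf) (T.sc (T.sx (T.sb (T.sc T.leaf T.leaf) (T.sc T.leaf T.leaf)) T.leaf) (T.sx T.leaf (T.sb (T.sc T.leaf T.leaf) T.leaf)))) (T.sb (T.sc (T.sx T.leaf (T.sb (T.sc (T.sx (T.sb T.leaf T.leaf) T.leaf)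 (T.sx T.leaf (T.sb T.leaf T.leaf))) T.leaf)) (T.sx (T.sb T.leaf T.leaf) (T.sb (T.sc (T.sx T.leaf (T.sb (T.sc T.leaf (T.sx T.leaf (T.sb T.leaf T.leaf))) T.leaf)) (T.sx T.leaf (T.sb (T.sc (T.sx T.leaf (T.sb (T.sc T.leaf (T.sx T.leaf T.leaf)) T.leaf)) (T.sx T.leaf T.leaf)) T.leaf))) T.leaf))) T.leaf)))) (T.sb (T.sc (T.sx (T.sb (T.sc (T.sx (T.sb (T.sc T.leaf (T.sx T.leaf T.leaf)) (T.sc (T.sx T.leaf (T.sb T.leaf (T.sc (T.sx (T.sb T.leaf (T.sc (T.sx T.leaf (T.sb T.leaf (T.sc T.leaf T.leaf))) (T.sx T.leaf (T.sb T.leaf T.leaf)))) (T.sb T.leaf (T.sc T.leaf T.leaf))) (T.sx (T.sb (T.sc (T.sx T.leaf T.leaf) (T.sx T.leaf T.leaf)) T.leaf) (T.sb (T.sc T.leaf T.leaf) T.leaf))))) (T.sx (T.sb T.leaf (T.sc T.leaf (T.sx T.leaf T.leaf))) (T.sb (T.sc (T.sx (T.sb T.leaf (T.sc (T.sx T.leaf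 T.leaf) (T.sx T.leaf T.leaf))) (T.sb T.leaf (T.sc T.leaf T.leaf))) (T.sx (T.sb (T.sc T.leaf T.leaf) T.leaf) (T.sb T.leaf T.leaf))) T.leaf)))) (T.sb T.leaf (T.sc (T.sx (T.sb T.leaf (T.sc T.leaf T.leaf)) (T.sb T.leaf (T.sc T.leaf T.leaf))) (T.sx (T.sb (T.sc T.leaf T.leaf) T.leaf) (T.sb (T.sc T.leaf T.leaf) T.leaf))))) (T.sx (T.sb (T.sc (T.sx (T.sb (T.sc T.leaf (T.sx T.leaf T.leaf)) (T.sc T.leaf (T.sx T.leaf (T.sb (T.sc (T.sx T.leaf (T.sb T.leaf (T.sc T.leaf T.leaf))) (T.sx (T.sb T.leaf T.leaf) (T.sb T.leaf T.leaf))) T.leaf)))) (T.sb T.leaf (T.sc (T.sx (T.sb T.leaf (T.sc T.leaf T.leaf)) T.leaf) (T.sx (T.sb (T.sc T.leaf T.leaf) T.leaf) T.leaf)))) (T.sx (T.sb (T.sc (T.sx (T.sb (T.sc T.leaf (T.sx T.leaf (T.sb T.leaf T.leaf))) (T.sc T.leaf T.leaf)) (T.sb T.leaf (T.sc (T.sx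 (T.sb T.leaf (T.sc (T.sx T.leaf T.leaf) T.leaf)) T.leaf) (T.sx T.leaf T.leaf)))) (T.sx T.leaf (T.sb (T.sc (T.sx (T.sb T.leaf T.leaf) T.leaf) T.leaf) T.leaf))) (T.sc (T.sx T.leaf T.leaf) T.leaf)) (T.sb (T.sc (T.sx (T.sb T.leaf (T.sc T.leaf T.leaf)) T.leaf) (T.sx (T.sb (T.sc T.leaf T.leaf) T.leaf) T.leaf)) T.leaf))) (T.sc (T.sx (T.sb (T.sc (T.sx T.leaf (T.sb T.leaf T.leaf)) T.leaf) T.leaf) T.leaf) T.leaf)) (T.sb (T.sc (T.sx (T.sb T.leaf (T.sc T.leaf T.leaf)) T.leaf) (T.sx (T.sb (T.sc T.leaf T.leaf) T.leaf) T.leaf)) T.leaf))) (T.sc (T.sx (T.sb (T.sc (T.sx (T.sb T.leaf (T.sc (T.sx T.leaf T.leaf) T.leaf)) (T.sb (T.sc (T.sx (T.sb T.leaf T.leaf) T.leaf) T.leaf) T.leaf)) (T.sx (T.sb T.leaf T.leaf) T.leaf)) (T.sc (T.sx (T.sb T.leaf (T.sc (T.sx (T.sb T.leaf T.leaf) T.leaf)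 (T.sx (T.sb T.leaf T.leaf) T.leaf))) T.leaf) (T.sx (T.sb T.leaf T.leaf) T.leaf))) (T.sb T.leaf T.leaf)) (T.sx (T.sb T.leaf T.leaf) (T.sb T.leaf T.leaf)))) (T.sb (T.sc (T.sx (T.sb T.leaf (T.sc T.leaf T.leaf)) (T.sb T.leaf (T.sc T.leaf T.leaf))) (T.sx (T.sb (T.sc T.leaf T.leaf) T.leaf) (T.sb (T.sc T.leaf T.leaf) T.leaf))) T.leaf)) (T.sx (T.sb (T.sc (T.sx (T.sb (T.sc (T.sx T.leaf T.leaf) T.leaf) T.leaf) T.leaf) (T.sx (T.sb T.leaf (T.sc T.leaf (T.sx T.leaf T.leaf))) T.leaf)) (T.sc (T.sx (T.sb (T.sc T.leaf (T.sx (T.sb T.leaf T.leaf) (T.sb T.leaf (T.sc T.leaf T.leaf)))) (T.sc (T.sx T.leaf T.leaf) T.leaf)) (T.sb T.leaf (T.sc T.leaf T.leaf))) (T.sx T.leaf (T.sb (T.sc (T.sx (T.sb T.leaf T.leaf) (T.sb T.leaf T.leaf)) T.leaf) T.leaf)))) (T.sb T.leaf (T.sc (T.sx (T.sb T.leaf T.leaf)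 T.leaf) (T.sx (T.sb (T.sc (T.sx (T.sb T.leaf T.leaf) T.leaf) T.leaf) T.leaf) T.leaf))))) (T.sc (T.sx (T.sb (T.sc (T.sx (T.sb (T.sc (T.sx (T.sb (T.sc (T.sx (T.sb (T.sc (T.sx (T.sb T.leaf T.leaf) T.leaf) T.leaf) T.leaf) T.leaf) T.leaf) T.leaf) T.leaf) T.leaf) T.leaf) T.leaf) (T.sx (T.sb T.leaf T.leaf) T.leaf)) T.leaf) T.leaf) (T.sx (T.sb (T.sc (T.sx (T.sb T.leaf T.leaf) T.leaf) (T.sx (T.sb (T.sc (T.sx (T.sb T.leaf T.leaf) T.leaf) (T.sx (T.sb (T.sc (T.sx (T.sb T.leaf T.leaf) T.leaf) T.leaf) T.leaf) T.leaf)) T.leaf) T.leaf)) T.leaf) T.leaf))))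

set_option maxRecDepth 10000 in
lemma tree_ok : valid 0 1920000 0 960000 0 1920000 bigTree = true := by decide

lemma ratCover {x b c : ℝ} (hx0 : 0 ≤ x) (hb0 : 0 ≤ b)
    (hc0 : 0 ≤ c) (hc2 : c ≤ 2) (hreg : x + 2*b ≤ 2) : DisjQ x b c := by
  refine valid_sound bigTree 0 1920000 0 960000 0 1920000 tree_ok ?_ ?_ ?_ ?_ ?_ ?_ hreg
  · push_cast; nlinarith
  · push_cast; nlinarith
  · push_cast; nlinarith
  · push_cast; nlinarith
  · push_cast; nlinarith
  · push_cast; nlinarith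

lemma conv1 {s x b c u : ℝ} (hs : s^2 = 2)
    (H : ((x - 0)^2 + 2*(b - 0)^2 + u)^2 + 2*(c + 0*x + 0*b + 0)^2 < 4) :
    (x^2 + (s*b)^2 + u)^2 + (s*c)^2 < 4 := by
  have e : (x^2 + (s*b)^2 + u)^2 + (s*c)^2 = ((x - 0)^2 + 2*(b - 0)^2 + u)^2 + 2*(c + 0*x + 0*b + 0)^2 := by
    linear_combination (c^2 + 2*b^2*u + 2*b^4 + b^4*s^2 + 2*x^2*b^2) * hs
  rw [e]; exact H

lemma conv2 {s x b c u : ℝ} (hs : s^2 = 2)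
    (H : ((x - 2)^2 + 2*(b - 0)^2 + u)^2 + 2*(c + 0*x + 4*b + 0)^2 < 4) :
    ((x - 2)^2 + (s*b)^2 + u)^2 + (s*c + 4*(s*b))^2 < 4 := by
  have e : ((x - 2)^2 + (s*b)^2 + u)^2 + (s*c + 4*(s*b))^2 = ((x - 2)^2 + 2*(b - 0)^2 + u)^2 + 2*(c + 0*x + 4*b + 0)^2 := by
    linear_combination (c^2 + 8*b*c + 24*b^2 + 2*b^2*u + 2*b^4 + b^4*s^2 + (-8)*x*b^2 + 2*x^2*b^2) * hs
  rw [e]; exact H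

lemma conv3 {s x b c u : ℝ} (hs : s^2 = 2)
    (H : ((x - 0)^2 + 2*(b - 1)^2 + u)^2 + 2*(c + (-2)*x + 0*b + 0)^2 < 4) :
    (x^2 + (s*b - s)^2 + u)^2 + (s*c - 2*s*x)^2 < 4 := by
  have e : (x^2 + (s*b - s)^2 + u)^2 + (s*c - 2*s*x)^2 = ((x - 0)^2 + 2*(b - 1)^2 + u)^2 + 2*(c + (-2)*x + 0*b + 0)^2 := by
    linear_combination (2 + 2*u + s^2 + c^2 + (-8)*b + (-4)*b*u + (-4)*b*s^2 + 12*b^2 + 2*b^2*u + 6*b^2*s^2 + (-8)*b^3 + (-4)*b^3*s^2 + 2*b^4 + b^4*s^2 + (-4)*x*c + 6*x^2 + (-4)*x^2*b + 2*x^2*b^2) * hs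
  rw [e]; exact H

lemma conv4 {s x b c u : ℝ} (hs : s^2 = 2)
    (H : ((x - 0)^2 + 2*(b - 0)^2 + u)^2 + 2*(c + 0*x + 0*b + (-2))^2 < 4) :
    (x^2 + (s*b)^2 + u)^2 + (s*c - 2*s)^2 < 4 := by
  have e : (x^2 + (s*b)^2 + u)^2 + (s*c - 2*s)^2 = ((x - 0)^2 + 2*(b - 0)^2 + u)^2 + 2*(c + 0*x + 0*b + (-2))^2 := by
    linear_combination (4 + (-4)*c + c^2 + 2*b^2*u + 2*b^4 + b^4*s^2 + 2*x^2*b^2) * hs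
  rw [e]; exact H

lemma conv5 {s x b c u : ℝ} (hs : s^2 = 2)
    (H : ((x - 2)^2 + 2*(b - 0)^2 + u)^2 + 2*(c + 0*x + 4*b + (-2))^2 < 4) :
    ((x - 2)^2 + (s*b)^2 + u)^2 + (s*c - 2*s + 4*(s*b))^2 < 4 := by
  have e : ((x - 2)^2 + (s*b)^2 + u)^2 + (s*c - 2*s + 4*(s*b))^2 = ((x - 2)^2 + 2*(b - 0)^2 + u)^2 + 2*(c + 0*x + 4*b + (-2))^2 := by
    linear_combination (4 + (-4)*c + c^2 + (-16)*b + 8*b*c + 24*b^2 + 2*b^2*u + 2*b^4 + b^4*s^2 + (-8)*x*b^2 + 2*x^2*b^2) * hs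
  rw [e]; exact H

lemma conv6 {s x b c u : ℝ} (hs : s^2 = 2)
    (H : ((x - 0)^2 + 2*(b - 1)^2 + u)^2 + 2*(c + (-2)*x + 0*b + (-2))^2 < 4) :
    (x^2 + (s*b - s)^2 + u)^2 + (s*c - 2*s - 2*s*x)^2 < 4 := by
  have e : (x^2 + (s*b - s)^2 + u)^2 + (s*c - 2*s - 2*s*x)^2 = ((x - 0)^2 + 2*(b - 1)^2 + u)^2 + 2*(c + (-2)*x + 0*b + (-2))^2 := by
    linear_combination (6 + 2*u + s^2 + (-4)*c + c^2 + (-8)*b + (-4)*b*u + (-4)*b*s^2 + 12*b^2 + 2*b^2*u + 6*b^2*s^2 + (-8)*b^3 + (-4)*b^3*s^2 + 2*b^4 + b^4*s^2 + 8*x + (-4)*x*c + 6*x^2 + (-4)*x^2*b + 2*x^2*b^2) * hs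
  rw [e]; exact H

lemma conv7 {s x b c u : ℝ} (hs : s^2 = 2)
    (H : ((x - 2/3)^2 + 2*(b - 1/3)^2 + u)^2 + 2*(c + (-2/3)*x + (4/3)*b + (-2/3))^2 < 4/3) :
    ((x - 2/3)^2 + (s*b - s/3)^2 + u)^2 + (s*c - 2*s/3 + (4*(s*b) - 2*s*x)/3)^2 < 4/3 := by
  have e : ((x - 2/3)^2 + (s*b - s/3)^2 + u)^2 + (s*c - 2*s/3 + (4*(s*b) - 2*s*x)/3)^2 = ((x - 2/3)^2 + 2*(b - 1/3)^2 + u)^2 + 2*(c + (-2/3)*x + (4/3)*b + (-2/3))^2 := by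
    linear_combination ((46/81) + (2/9)*u + (1/81)*s^2 + (-4/3)*c + c^2 + (-8/3)*b + (-4/3)*b*u + (-4/27)*b*s^2 + (8/3)*b*c + 4*b^2 + 2*b^2*u + (2/3)*b^2*s^2 + (-8/3)*b^3 + (-4/3)*b^3*s^2 + 2*b^4 + b^4*s^2 + (16/27)*x + (-4/3)*x*c + (-8/3)*x*b^2 + (2/3)*x^2 + (-4/3)*x^2*b + 2*x^2*b^2) * hs
  rw [e]; exact H

lemma conv8 {s x b c u : ℝ} (hs : s^2 = 2)
    (H : ((x - 4/3)^2 + 2*(b - 1/3)^2 + u)^2 + 2*(c + (-2/3)*x + (8/3)*b + (-2))^2 < 4/3) :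
    ((x - 4/3)^2 + (s*b - s/3)^2 + u)^2 + (s*c - 2*s + (8*(s*b) - 2*s*x)/3)^2 < 4/3 := by
  have e : ((x - 4/3)^2 + (s*b - s/3)^2 + u)^2 + (s*c - 2*s + (8*(s*b) - 2*s*x)/3)^2 = ((x - 4/3)^2 + 2*(b - 1/3)^2 + u)^2 + 2*(c + (-2/3)*x + (8/3)*b + (-2))^2 := by
    linear_combination ((358/81) + (2/9)*u + (1/81)*s^2 + (-4)*c + c^2 + (-40/3)*b + (-4/3)*b*u + (-4/27)*b*s^2 + (16/3)*b*c + 12*b^2 + 2*b^2*u + (2/3)*b^2*s^2 + (-8/3)*b^3 + (-4/3)*b^3*s^2 + 2*b^4 + b^4*s^2 + (56/27)*x + (-4/3)*x*c + (-16/3)*x*b^2 + (2/3)*x^2 + (-4/3)*x^2*b + 2*x^2*b^2) * hs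
  rw [e]; exact H

lemma main_real {x y v : ℝ} (s : ℝ) (hs : s^2 = 2) (hspos : 0 < s)
    (hx0 : 0 ≤ x) (hy0 : 0 ≤ y) (hxy : x + s*y ≤ 2) (hv0 : 0 ≤ v) (hv2 : v ≤ 2*s) :
    (x^2 + y^2 + (1213/2500:ℝ))^2 + v^2 < 4 ∨
    ((x - 2)^2 + y^2 + (1213/2500:ℝ))^2 + (v + 4*y)^2 < 4 ∨
    (x^2 + (y - s)^2 + (1213/2500:ℝ))^2 + (v - 2*s*x)^2 < 4 ∨
    (x^2 + y^2 + (1213/2500:ℝ))^2 + (v - 2*s)^2 < 4 ∨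
    ((x - 2)^2 + y^2 + (1213/2500:ℝ))^2 + (v - 2*s + 4*y)^2 < 4 ∨
    (x^2 + (y - s)^2 + (1213/2500:ℝ))^2 + (v - 2*s - 2*s*x)^2 < 4 ∨
    ((x - 2/3)^2 + (y - s/3)^2 + (1213/2500:ℝ))^2 + (v - 2*s/3 + (4*y - 2*s*x)/3)^2 < 4/3 ∨
    ((x - 4/3)^2 + (y - s/3)^2 + (1213/2500:ℝ))^2 + (v - 2*s + (8*y - 2*s*x)/3)^2 < 4/3 := by
  have hsne : s ≠ 0 := ne_of_gt hspos
  set b : ℝ := y / s with hb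
  set c : ℝ := v / s with hc
  have hy' : y = s*b := by rw [hb]; field_simp
  have hv' : v = s*c := by rw [hc]; field_simp
  have hb0 : 0 ≤ b := div_nonneg hy0 hspos.le
  have hc0 : 0 ≤ c := div_nonneg hv0 hspos.le
  have hc2 : c ≤ 2 := by rw [hc, div_le_iff₀ hspos]; linarith
  have hreg : x + 2*b ≤ 2 := by
    have h1 : s*(2*b) = s*(s*y) := by
      rw [hb]
      have h2 : s*(2*(y/s)) = 2*y := by field_simp
      rw [h2]; linear_combination (-y)*hs
    have h2b' : 2*b = s*y := mul_left_cancel₀ hsne h1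
    linarith
  have D := ratCover hx0 hb0 hc0 hc2 hreg
  rw [DisjQ] at D
  rw [hy', hv']
  rcases D with H|H|H|H|H|H|H|H
  · exact Or.inl (conv1 hs H)
  · exact Or.inr (Or.inl (conv2 hs H))
  · exact Or.inr (Or.inr (Or.inl (conv3 hs H)))
  · exact Or.inr (Or.inr (Or.inr (Or.inl (conv4 hs H))))
  · exact Or.inr (Or.inr (Or.inr (Or.inr (Or.inl (conv5 hs H)))))
  · exact Or.inr (Or.inr (Or.inr (Or.inr (Or.inr (Or.inl (conv6 hs H))))))
  · exact Or.inr (Or.inr (Or.inr (Or.inr (Or.inr (Or.inr (Or.inl (conv7 hs H)))))))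
  · exact Or.inr (Or.inr (Or.inr (Or.inr (Or.inr (Or.inr (Or.inr (conv8 hs H)))))))

end CoverAux

open CoverAux

lemma sqrt2_sq : sqrt2^2 = 2 := Real.sq_sqrt (by norm_num)
lemma sqrt2_pos : 0 < sqrt2 := Real.sqrt_pos.mpr (by norm_num)
lemma is2_re : is2.re = 0 := by simp [is2]
lemma is2_im : is2.im = sqrt2 := by simp [is2, sqrt2]

lemma xc_red {z : ℂ} {v u : ℝ} {c : ℂ} {w r4 : ℝ} (hu : 0 ≤ u)
    (H : ((z.re - c.re)^2 + (z.im - c.im)^2 + u)^2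
      + (v - w + 2*(z.im*c.re - z.re*c.im))^2 < r4) :
    xcDist z v u c w < r4 ^ ((1:ℝ)/4) := by
  have hA : (‖z - c‖)^2 = (z.re - c.re)^2 + (z.im - c.im)^2 := by
    rw [Complex.sq_norm, Complex.normSq_apply, Complex.sub_re, Complex.sub_im]; ring
  have hI : (z * (starRingEnd ℂ) c).im = z.im*c.re - z.re*c.im := by
    simp [Complex.mul_im]; ring
  rw [xcDist, hA, hI]
  exact Real.rpow_lt_rpow (by positivity) H (by norm_num)

lemma four_rpow : ((4:ℝ)) ^ ((1:ℝ)/4) = sqrt2 := by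
  rw [sqrt2, Real.sqrt_eq_rpow,
    show (4:ℝ) = 2^(2:ℕ) by norm_num, ← Real.rpow_natCast 2 2,
    ← Real.rpow_mul (by norm_num)]
  norm_num

theorem covering_of_prism_d2 :
    ∀ p ∈ convexHull ℝ ({((0 : ℂ), (0 : ℝ)), (2, 0), (is2, 0),
        (0, 2 * sqrt2), (2, 2 * sqrt2), (is2, 2 * sqrt2)} : Set (ℂ × ℝ)),
      xcDist p.1 p.2 0.4852 0 0 < sqrt2 ∨
      xcDist p.1 p.2 0.4852 2 0 < sqrt2 ∨
      xcDist p.1 p.2 0.4852 is2 0 < sqrt2 ∨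
      xcDist p.1 p.2 0.4852 0 (2 * sqrt2) < sqrt2 ∨
      xcDist p.1 p.2 0.4852 2 (2 * sqrt2) < sqrt2 ∨
      xcDist p.1 p.2 0.4852 is2 (2 * sqrt2) < sqrt2 ∨
      xcDist p.1 p.2 0.4852 (2/3 + (1/3) * is2) ((2/3) * sqrt2) < (4/3 : ℝ) ^ ((1:ℝ)/4) ∨
      xcDist p.1 p.2 0.4852 (4/3 + (1/3) * is2) (2 * sqrt2) < (4/3 : ℝ) ^ ((1:ℝ)/4) := by
  intro p hp
  -- extract linear constraints from the convex hull
  have hsub : convexHull ℝ ({((0 : ℂ), (0 : ℝ)), (2, 0), (is2, 0),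
        (0, 2 * sqrt2), (2, 2 * sqrt2), (is2, 2 * sqrt2)} : Set (ℂ × ℝ)) ⊆
      {q : ℂ × ℝ | 0 ≤ q.1.re ∧ 0 ≤ q.1.im ∧ q.1.re + sqrt2*q.1.im ≤ 2 ∧
        0 ≤ q.2 ∧ q.2 ≤ 2*sqrt2} := by
    apply convexHull_min
    · rintro q hq
      simp only [Set.mem_insert_iff, Set.mem_singleton_iff] at hq
      have h2 : sqrt2*sqrt2 = 2 := by nlinarith [sqrt2_sq]
      rcases hq with rfl|rfl|rfl|rfl|rfl|rfl <;>
        refine ⟨?_, ?_, ?_, ?_, ?_⟩ <;>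
        simp [is2_re, is2_im, h2] <;>
        nlinarith [sqrt2_pos, sqrt2_sq]
    · intro q hq r hr μ ν hμ hν hμν
      simp only [Set.mem_setOf_eq] at hq hr ⊢
      have e1 : (μ • q + ν • r).1.re = μ * q.1.re + ν * r.1.re := by
        simp [Complex.add_re, Complex.smul_re]
      have e2 : (μ • q + ν • r).1.im = μ * q.1.im + ν * r.1.im := by
        simp [Complex.add_im, Complex.smul_im]
      have e3 : (μ • q + ν • r).2 = μ * q.2 + ν * r.2 := by simp [smul_eq_mul]
      rw [e1, e2, e3]
      refine ⟨by nlinarith [hq.1, hr.1], by nlinarith [hq.2.1, hr.2.1], ?_, ?_, ?_⟩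
      · nlinarith [hq.2.2.1, hr.2.2.1, mul_le_mul_of_nonneg_left hq.2.2.1 hμ,
          mul_le_mul_of_nonneg_left hr.2.2.1 hν]
      · nlinarith [hq.2.2.2.1, hr.2.2.2.1]
      · nlinarith [mul_le_mul_of_nonneg_left hq.2.2.2.2 hμ,
          mul_le_mul_of_nonneg_left hr.2.2.2.2 hν]
  obtain ⟨hx0, hy0, hxy, hv0, hv2⟩ := hsub hp
  have hu : (0.4852 : ℝ) = 1213/2500 := by norm_num
  have key := main_real (x := p.1.re) (y := p.1.im) (v := p.2) sqrt2 sqrt2_sq sqrt2_pos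
    hx0 hy0 hxy hv0 hv2
  rcases key with H|H|H|H|H|H|H|H
  · refine Or.inl ?_
    rw [hu]
    refine (xc_red (by norm_num) ?_).trans_eq four_rpow
    calc ((p.1.re - (0:ℂ).re)^2 + (p.1.im - (0:ℂ).im)^2 + (1213/2500:ℝ))^2
          + (p.2 - 0 + 2*(p.1.im*(0:ℂ).re - p.1.re*(0:ℂ).im))^2
        = (p.1.re^2 + p.1.im^2 + (1213/2500:ℝ))^2 + p.2^2 := by
          simp
      _ < 4 := H
  · refine Or.inr (Or.inl ?_)
    rw [hu]
    refine (xc_red (by norm_num) ?_).trans_eq four_rpow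
    calc ((p.1.re - (2:ℂ).re)^2 + (p.1.im - (2:ℂ).im)^2 + (1213/2500:ℝ))^2
          + (p.2 - 0 + 2*(p.1.im*(2:ℂ).re - p.1.re*(2:ℂ).im))^2
        = ((p.1.re - 2)^2 + p.1.im^2 + (1213/2500:ℝ))^2 + (p.2 + 4*p.1.im)^2 := by
          simp; ring
      _ < 4 := H
  · refine Or.inr (Or.inr (Or.inl ?_))
    rw [hu]
    refine (xc_red (by norm_num) ?_).trans_eq four_rpow
    calc ((p.1.re - is2.re)^2 + (p.1.im - is2.im)^2 + (1213/2500:ℝ))^2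
          + (p.2 - 0 + 2*(p.1.im*is2.re - p.1.re*is2.im))^2
        = (p.1.re^2 + (p.1.im - sqrt2)^2 + (1213/2500:ℝ))^2
            + (p.2 - 2*sqrt2*p.1.re)^2 := by
          rw [is2_re, is2_im]; ring
      _ < 4 := H
  · refine Or.inr (Or.inr (Or.inr (Or.inl ?_)))
    rw [hu]
    refine (xc_red (by norm_num) ?_).trans_eq four_rpow
    calc ((p.1.re - (0:ℂ).re)^2 + (p.1.im - (0:ℂ).im)^2 + (1213/2500:ℝ))^2
          + (p.2 - 2*sqrt2 + 2*(p.1.im*(0:ℂ).re - p.1.re*(0:ℂ).im))^2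
        = (p.1.re^2 + p.1.im^2 + (1213/2500:ℝ))^2 + (p.2 - 2*sqrt2)^2 := by
          simp
      _ < 4 := H
  · refine Or.inr (Or.inr (Or.inr (Or.inr (Or.inl ?_))))
    rw [hu]
    refine (xc_red (by norm_num) ?_).trans_eq four_rpow
    calc ((p.1.re - (2:ℂ).re)^2 + (p.1.im - (2:ℂ).im)^2 + (1213/2500:ℝ))^2
          + (p.2 - 2*sqrt2 + 2*(p.1.im*(2:ℂ).re - p.1.re*(2:ℂ).im))^2
        = ((p.1.re - 2)^2 + p.1.im^2 + (1213/2500:ℝ))^2 + (p.2 - 2*sqrt2 + 4*p.1.im)^2 := by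
          simp; ring
      _ < 4 := H
  · refine Or.inr (Or.inr (Or.inr (Or.inr (Or.inr (Or.inl ?_)))))
    rw [hu]
    refine (xc_red (by norm_num) ?_).trans_eq four_rpow
    calc ((p.1.re - is2.re)^2 + (p.1.im - is2.im)^2 + (1213/2500:ℝ))^2
          + (p.2 - 2*sqrt2 + 2*(p.1.im*is2.re - p.1.re*is2.im))^2
        = (p.1.re^2 + (p.1.im - sqrt2)^2 + (1213/2500:ℝ))^2
            + (p.2 - 2*sqrt2 - 2*sqrt2*p.1.re)^2 := by
          rw [is2_re, is2_im]; ring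
      _ < 4 := H
  · refine Or.inr (Or.inr (Or.inr (Or.inr (Or.inr (Or.inr (Or.inl ?_))))))
    rw [hu]
    refine xc_red (by norm_num) ?_
    have cre : ((2/3 + (1/3) * is2 : ℂ)).re = 2/3 := by simp [is2_re]
    have cim : ((2/3 + (1/3) * is2 : ℂ)).im = sqrt2/3 := by
      simp [is2_im]; ring
    calc ((p.1.re - ((2/3 + (1/3) * is2 : ℂ)).re)^2
            + (p.1.im - ((2/3 + (1/3) * is2 : ℂ)).im)^2 + (1213/2500:ℝ))^2
          + (p.2 - (2/3)*sqrt2 + 2*(p.1.im*((2/3 + (1/3) * is2 : ℂ)).re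
            - p.1.re*((2/3 + (1/3) * is2 : ℂ)).im))^2
        = ((p.1.re - 2/3)^2 + (p.1.im - sqrt2/3)^2 + (1213/2500:ℝ))^2
            + (p.2 - 2*sqrt2/3 + (4*p.1.im - 2*sqrt2*p.1.re)/3)^2 := by
          rw [cre, cim]; ring
      _ < 4/3 := H
  · refine Or.inr (Or.inr (Or.inr (Or.inr (Or.inr (Or.inr (Or.inr ?_))))))
    rw [hu]
    refine xc_red (by norm_num) ?_
    have cre : ((4/3 + (1/3) * is2 : ℂ)).re = 4/3 := by simp [is2_re]
    have cim : ((4/3 + (1/3) * is2 : ℂ)).im = sqrt2/3 := by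
      simp [is2_im]; ring
    calc ((p.1.re - ((4/3 + (1/3) * is2 : ℂ)).re)^2
            + (p.1.im - ((4/3 + (1/3) * is2 : ℂ)).im)^2 + (1213/2500:ℝ))^2
          + (p.2 - 2*sqrt2 + 2*(p.1.im*((4/3 + (1/3) * is2 : ℂ)).re
            - p.1.re*((4/3 + (1/3) * is2 : ℂ)).im))^2
        = ((p.1.re - 4/3)^2 + (p.1.im - sqrt2/3)^2 + (1213/2500:ℝ))^2
            + (p.2 - 2*sqrt2 + (8*p.1.im - 2*sqrt2*p.1.re)/3)^2 := by
          rw [cre, cim]; ring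
      _ < 4/3 := H
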